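/- The triple ratio is a cross ratio of four lines through a vertex: let ((v₀,η₀), (v₁,η₁), (v₂,η₂)) be a triple of flags in general position, let u ∈ ℝ³ be a nonzero vector with η₁(u) = η₂(u) = 0, and let f₁, f, f₂ be nonzero linear functionals vanishing at v₀ with f₁(v₁) = 0, f(u) = 0, f₂(v₂) = 0 (i.e., the lines V₀V₁, V₀(η₁∩η₂), V₀V₂). Then the cross ratio cross(η₀, f₁, f, f₂), computed in the 2-dimensional subspace of (ℝ³)* of functionals vanishing at v₀, equals the triple ratio 𝕋((v₀,η₀),(v₁,η₁),(v₂,η₂)). -/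

import Mathlib

/-- The triple ratio of three flags `(vᵢ, ηᵢ)` of `ℝP²`. -/
noncomputable def tripleRatio (v₀ v₁ v₂ : Fin 3 → ℝ)
    (η₀ η₁ η₂ : (Fin 3 → ℝ) →ₗ[ℝ] ℝ) : ℝ :=
  (η₀ v₁ * η₁ v₂ * η₂ v₀) / (η₀ v₂ * η₁ v₀ * η₂ v₁)

/-- The `2×2` determinant of the coordinate vectors of `P` and `Q` with respect to
a basis `b` of a (2-dimensional) real module. -/
noncomputable def det2 {M : Type*} [AddCommGroup M] [Module ℝ M]
    (b : Module.Basis (Fin 2) ℝ M) (P Q : M) : ℝ :=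
  b.repr P 0 * b.repr Q 1 - b.repr P 1 * b.repr Q 0

/-- The cross ratio of four vectors of a (2-dimensional) real module, computed with
respect to a basis `b`. -/
noncomputable def crossRatioIn {M : Type*} [AddCommGroup M] [Module ℝ M]
    (b : Module.Basis (Fin 2) ℝ M) (P₀ P₁ P₂ P₃ : M) : ℝ :=
  (det2 b P₀ P₁ * det2 b P₂ P₃) / (det2 b P₀ P₃ * det2 b P₁ P₂)

/-- The submodule of linear functionals on `ℝ³` vanishing at a given vector `v`,
i.e. the pencil of lines of `ℝP²` through the point `[v]`. -/
noncomputable def annAt (v : Fin 3 → ℝ) : Submodule ℝ ((Fin 3 → ℝ) →ₗ[ℝ] ℝ) where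
  carrier := {f | f v = 0}
  add_mem' := by
    intro f g hf hg
    simp only [Set.mem_setOf_eq, LinearMap.add_apply] at *
    rw [hf, hg, add_zero]
  zero_mem' := by simp
  smul_mem' := by
    intro c f hf
    simp only [Set.mem_setOf_eq, LinearMap.smul_apply] at *
    rw [hf, smul_zero]

set_option maxHeartbeats 1600000 in
/-- The triple ratio of a triple of flags in general position is the cross ratio of
the four lines `η₀`, `V₀V₁`, `V₀(η₁∩η₂)`, `V₀V₂` through the vertex `V₀`. -/
theorem crossRatio_of_lines_eq_tripleRatio
    (v₀ v₁ v₂ : Fin 3 → ℝ) (η₀ η₁ η₂ : (Fin 3 → ℝ) →ₗ[ℝ] ℝ)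
    (hv₀ : v₀ ≠ 0) (hv₁ : v₁ ≠ 0) (hv₂ : v₂ ≠ 0)
    (hη₀ : η₀ ≠ 0) (hη₁ : η₁ ≠ 0) (hη₂ : η₂ ≠ 0)
    (h₀ : η₀ v₀ = 0) (h₁ : η₁ v₁ = 0) (h₂ : η₂ v₂ = 0)
    (hv : LinearIndependent ℝ ![v₀, v₁, v₂])
    (hη : LinearIndependent ℝ ![η₀, η₁, η₂])
    (h01 : η₀ v₁ ≠ 0) (h02 : η₀ v₂ ≠ 0) (h10 : η₁ v₀ ≠ 0)
    (h12 : η₁ v₂ ≠ 0) (h20 : η₂ v₀ ≠ 0) (h21 : η₂ v₁ ≠ 0)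
    -- the point `η₁ ∩ η₂`
    (u : Fin 3 → ℝ) (hu : u ≠ 0) (hu1 : η₁ u = 0) (hu2 : η₂ u = 0)
    -- the lines `V₀V₁`, `V₀(η₁∩η₂)`, `V₀V₂`
    (f₁ f f₂ : (Fin 3 → ℝ) →ₗ[ℝ] ℝ)
    (hf₁ : f₁ ≠ 0) (hf : f ≠ 0) (hf₂ : f₂ ≠ 0)
    (hf₁0 : f₁ v₀ = 0) (hf0 : f v₀ = 0) (hf₂0 : f₂ v₀ = 0)
    (hf₁1 : f₁ v₁ = 0) (hfu : f u = 0) (hf₂2 : f₂ v₂ = 0)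
    (b : Module.Basis (Fin 2) ℝ (annAt v₀)) :
    crossRatioIn (M := annAt v₀) b ⟨η₀, h₀⟩ ⟨f₁, hf₁0⟩ ⟨f, hf0⟩ ⟨f₂, hf₂0⟩ =
      tripleRatio v₀ v₁ v₂ η₀ η₁ η₂ := by
  classical
  have hcard : Fintype.card (Fin 3) = Module.finrank ℝ (Fin 3 → ℝ) := by simp
  set B : Module.Basis (Fin 3) ℝ (Fin 3 → ℝ) := basisOfLinearIndependentOfCardEqFinrank hv hcard
    with hBdef
  have hB0 : B 0 = v₀ := by
    rw [hBdef, coe_basisOfLinearIndependentOfCardEqFinrank]; rfl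
  have hB1 : B 1 = v₁ := by
    rw [hBdef, coe_basisOfLinearIndependentOfCardEqFinrank]; rfl
  have hB2 : B 2 = v₂ := by
    rw [hBdef, coe_basisOfLinearIndependentOfCardEqFinrank]; rfl
  -- a functional vanishing at v₀, v₁, v₂ is zero
  have ext0 : ∀ g : (Fin 3 → ℝ) →ₗ[ℝ] ℝ, g v₀ = 0 → g v₁ = 0 → g v₂ = 0 → g = 0 := by
    intro g g0 g1 g2
    apply B.ext
    intro i
    have hBi : B i = ![v₀, v₁, v₂] i := by
      rw [hBdef, coe_basisOfLinearIndependentOfCardEqFinrank]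
    rw [hBi, LinearMap.zero_apply]
    fin_cases i <;> simp [g0, g1, g2]
  -- the form D
  set D : annAt v₀ → annAt v₀ → ℝ :=
    fun P Q => (P : (Fin 3 → ℝ) →ₗ[ℝ] ℝ) v₁ * (Q : (Fin 3 → ℝ) →ₗ[ℝ] ℝ) v₂
      - (P : (Fin 3 → ℝ) →ₗ[ℝ] ℝ) v₂ * (Q : (Fin 3 → ℝ) →ₗ[ℝ] ℝ) v₁ with hDdef
  set k : ℝ := D (b 0) (b 1) with hkdef
  have key : ∀ P Q : annAt v₀, D P Q = k * det2 b P Q := by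
    intro P Q
    have hP : P = b.repr P 0 • b 0 + b.repr P 1 • b 1 := by
      have := b.sum_repr P
      rw [Fin.sum_univ_two] at this
      exact this.symm
    have hQ : Q = b.repr Q 0 • b 0 + b.repr Q 1 • b 1 := by
      have := b.sum_repr Q
      rw [Fin.sum_univ_two] at this
      exact this.symm
    rw [det2, hkdef, hDdef]
    conv_lhs => rw [hP, hQ]
    simp only [Submodule.coe_add, Submodule.coe_smul, LinearMap.add_apply,
      LinearMap.smul_apply, smul_eq_mul]
    ring
  -- injectivity of evaluation
  have hki : ∀ g : annAt v₀, (g : (Fin 3 → ℝ) →ₗ[ℝ] ℝ) v₁ = 0 →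
      (g : (Fin 3 → ℝ) →ₗ[ℝ] ℝ) v₂ = 0 → g = 0 := by
    intro g g1 g2
    have g0 : (g : (Fin 3 → ℝ) →ₗ[ℝ] ℝ) v₀ = 0 := g.2
    exact Subtype.ext (ext0 _ g0 g1 g2)
  have hind : ∀ α β : ℝ, α • b 0 + β • b 1 = 0 → α = 0 ∧ β = 0 := by
    intro α β h
    have h0 := congrArg (fun z => (b.repr z) 0) h
    have h1 := congrArg (fun z => (b.repr z) 1) h
    simp [Module.Basis.repr_self, Finsupp.single_apply] at h0 h1
    exact ⟨h0, h1⟩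
  have hkne : k ≠ 0 := by
    intro hk0
    set x0 := ((b 0 : annAt v₀) : (Fin 3 → ℝ) →ₗ[ℝ] ℝ) v₁ with hx0
    set y0 := ((b 0 : annAt v₀) : (Fin 3 → ℝ) →ₗ[ℝ] ℝ) v₂ with hy0
    set x1 := ((b 1 : annAt v₀) : (Fin 3 → ℝ) →ₗ[ℝ] ℝ) v₁ with hx1
    set y1 := ((b 1 : annAt v₀) : (Fin 3 → ℝ) →ₗ[ℝ] ℝ) v₂ with hy1
    have hk0' : x0 * y1 - y0 * x1 = 0 := hk0
    have hg : y1 • b 0 + (-y0) • b 1 = 0 := by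
      apply hki
      · simp only [Submodule.coe_add, Submodule.coe_smul, LinearMap.add_apply,
          LinearMap.smul_apply, smul_eq_mul, ← hx0, ← hx1]
        linarith
      · simp only [Submodule.coe_add, Submodule.coe_smul, LinearMap.add_apply,
          LinearMap.smul_apply, smul_eq_mul, ← hy0, ← hy1]
        ring
    have hh : x1 • b 0 + (-x0) • b 1 = 0 := by
      apply hki
      · simp only [Submodule.coe_add, Submodule.coe_smul, LinearMap.add_apply,
          LinearMap.smul_apply, smul_eq_mul, ← hx0, ← hx1]
        ring
      · simp only [Submodule.coe_add, Submodule.coe_smul, LinearMap.add_apply,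
          LinearMap.smul_apply, smul_eq_mul, ← hy0, ← hy1]
        linarith
    obtain ⟨hy1z, hy0z⟩ := hind _ _ hg
    obtain ⟨hx1z, hx0z⟩ := hind _ _ hh
    have : (b 0 : annAt v₀) = 0 := by
      apply hki
      · rw [← hx0]; linarith
      · rw [← hy0]; linarith
    exact b.ne_zero 0 this
  -- decomposition of u
  have hu' : B.repr u 0 • v₀ + B.repr u 1 • v₁ + B.repr u 2 • v₂ = u := by
    have := B.sum_repr u
    rw [Fin.sum_univ_three, hB0, hB1, hB2] at this
    exact this
  set a := B.repr u 0 with hadef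
  set bb := B.repr u 1 with hbbdef
  set cc := B.repr u 2 with hccdef
  have e1 : a * η₁ v₀ + cc * η₁ v₂ = 0 := by
    have := congrArg η₁ hu'
    simpa [map_add, map_smul, smul_eq_mul, h₁, hu1] using this
  have e2 : a * η₂ v₀ + bb * η₂ v₁ = 0 := by
    have := congrArg η₂ hu'
    simpa [map_add, map_smul, smul_eq_mul, h₂, hu2] using this
  have ef : bb * f v₁ + cc * f v₂ = 0 := by
    have := congrArg f hu'
    simpa [map_add, map_smul, smul_eq_mul, hf0, hfu] using this
  have ha : a ≠ 0 := by
    intro h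
    rw [h, zero_mul, zero_add] at e1 e2
    have hcc : cc = 0 := by
      rcases mul_eq_zero.mp e1 with h' | h'
      · exact h'
      · exact absurd h' h12
    have hbb : bb = 0 := by
      rcases mul_eq_zero.mp e2 with h' | h'
      · exact h'
      · exact absurd h' h21
    rw [h, hbb, hcc] at hu'
    simp at hu'
    exact hu hu'.symm
  have K : η₂ v₀ * η₁ v₂ * f v₁ + η₁ v₀ * η₂ v₁ * f v₂ = 0 := by
    have hmul : a * (η₂ v₀ * η₁ v₂ * f v₁ + η₁ v₀ * η₂ v₁ * f v₂) = 0 := by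
      linear_combination (η₂ v₁ * f v₂) * e1 + (η₁ v₂ * f v₁) * e2
        - (η₂ v₁ * η₁ v₂) * ef
    exact (mul_eq_zero.mp hmul).resolve_left ha
  have hfv1 : f v₁ ≠ 0 := by
    intro h
    have h2' : η₁ v₀ * η₂ v₁ * f v₂ = 0 := by linear_combination K - (η₂ v₀ * η₁ v₂) * h
    have hfv2 : f v₂ = 0 := by
      rcases mul_eq_zero.mp h2' with h' | h'
      · exact absurd (mul_eq_zero.mp h') (by push_neg; exact ⟨h10, h21⟩)
      · exact h'
    exact hf (ext0 f hf0 h hfv2)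
  have hfv2 : f v₂ ≠ 0 := by
    intro h
    have h1' : η₂ v₀ * η₁ v₂ * f v₁ = 0 := by linear_combination K - (η₁ v₀ * η₂ v₁) * h
    have hfv1' : f v₁ = 0 := by
      rcases mul_eq_zero.mp h1' with h' | h'
      · exact absurd (mul_eq_zero.mp h') (by push_neg; exact ⟨h20, h12⟩)
      · exact h'
    exact hf (ext0 f hf0 hfv1' h)
  have hf₁2 : f₁ v₂ ≠ 0 := fun h => hf₁ (ext0 f₁ hf₁0 hf₁1 h)
  have hf₂1 : f₂ v₁ ≠ 0 := fun h => hf₂ (ext0 f₂ hf₂0 h hf₂2)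
  have hdet : ∀ P Q : annAt v₀, det2 b P Q = D P Q / k := by
    intro P Q
    rw [key P Q]
    field_simp
  rw [crossRatioIn, hdet, hdet, hdet, hdet, tripleRatio]
  simp only [hDdef]
  simp only [hf₁1, hf₂2, mul_zero, zero_mul, zero_sub, sub_zero]
  field_simp
  linear_combination (-1 : ℝ) * K
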